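/- Let P be a finite N-free order with n elements and arc diagram A(P). Then e(P) ≤ n! · ∏_{v ∈ V(A(P))} (binom(i_v + o_v, o_v))^{-1}, where i_v and o_v are the in-degree and out-degree of vertex v in A(P). Equivalently, the number of linear extensions of P times ∏_v binom(i_v+o_v, o_v) is at most n!. -/

import Mathlib

/-- One-step reachability between vertices of a directed multigraph. -/
def vStep {V E : Type*} (src dst : E → V) (u v : V) : Prop :=
  ∃ e : E, src e = u ∧ dst e = v

/-- The line-digraph order on arcs: `x < y` iff some directed path has
first arc `x` and last arc `y`. -/
def lineLT {V E : Type*} (src dst : E → V) (x y : E) : Prop :=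
  Relation.TransGen (fun a b => dst a = src b) x y

/-- The number of linear extensions of a relation `r` on a finite type. -/
noncomputable def numLinExt (α : Type*) [Fintype α] (r : α → α → Prop) : ℕ :=
  Nat.card {σ : α ≃ Fin (Fintype.card α) // ∀ x y : α, r x y → σ x < σ y}

/-- Out-degree of a vertex in a directed multigraph. -/
noncomputable def outDeg {V E : Type*} (src : E → V) (v : V) : ℕ :=
  Nat.card {e : E // src e = v}

/-- In-degree of a vertex in a directed multigraph. -/
noncomputable def inDeg {V E : Type*} (dst : E → V) (v : V) : ℕ :=
  Nat.card {e : E // dst e = v}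


/-- linear-extension count with explicit codomain size -/
noncomputable def linExts (E : Type*) (r : E → E → Prop) (n : ℕ) : ℕ :=
  Nat.card {σ : E ≃ Fin n // ∀ x y : E, r x y → σ x < σ y}

lemma choose_ratio (j o : ℕ) : (j+1+o).choose o * (j+1) = (j+o).choose o * (j+1+o) := by
  have h1 := Nat.add_one_mul_choose_eq (j+o) j
  have h2 : (j+o).choose j = (j+o).choose o := by
    rw [← Nat.choose_symm (by omega : j ≤ j + o)]; congr 1; omega
  have h3 : (j+o+1).choose (j+1) = (j+o+1).choose o := by
    rw [← Nat.choose_symm (by omega : j+1 ≤ j + o + 1)]; congr 1; omega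
  have he : j+1+o = j+o+1 := by omega
  rw [he]
  simp only [Nat.succ_eq_add_one, h2, h3] at h1
  linarith

lemma card_sub0 {E : Type*} [Fintype E] (q : E → Prop) [DecidablePred q] :
    Nat.card {f : E // q f} = (Finset.univ.filter q).card := by
  rw [Nat.card_eq_fintype_card, Fintype.card_subtype]

lemma card_sub {E : Type*} [Fintype E] (p q : E → Prop) [DecidablePred p] [DecidablePred q] :
    Nat.card {f : {g : E // p g} // q f.1} = (Finset.univ.filter (fun f => p f ∧ q f)).card := by
  rw [Nat.card_eq_fintype_card,
    Fintype.card_congr (Equiv.subtypeSubtypeEquivSubtypeInter p q), Fintype.card_subtype]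

lemma card_eq_sum_out {V E : Type*} [Fintype E] [Fintype V] [DecidableEq V] (src : E → V) :
    Fintype.card E = ∑ v : V, (Finset.univ.filter (fun e => src e = v)).card := by
  rw [← Finset.card_univ, Finset.card_eq_sum_card_fiberwise (fun e _ => Finset.mem_univ (src e))]

open Finset

lemma card_res_ne {E : Type*} [Fintype E] (e : E) (q : E → Prop) (hq : ¬ q e) :
    Nat.card {f : {g : E // g ≠ e} // q f.1} = Nat.card {f : E // q f} := by
  classical
  rw [card_sub, card_sub0]
  congr 1
  ext f
  simp only [Finset.mem_filter, Finset.mem_univ, true_and, and_iff_right_iff_imp]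
  rintro hf rfl; exact hq hf

lemma card_res_eq {E : Type*} [Fintype E] (e : E) (q : E → Prop) (hq : q e) :
    Nat.card {f : {g : E // g ≠ e} // q f.1} + 1 = Nat.card {f : E // q f} := by
  classical
  rw [card_sub, card_sub0]
  have h1 : Finset.univ.filter (fun f => f ≠ e ∧ q f) = (Finset.univ.filter q).erase e := by
    ext f
    simp only [Finset.mem_filter, Finset.mem_univ, true_and, Finset.mem_erase]
  have he : e ∈ Finset.univ.filter q := Finset.mem_filter.mpr ⟨Finset.mem_univ e, hq⟩
  rw [h1, Finset.card_erase_of_mem he]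
  have : 1 ≤ (Finset.univ.filter q).card := Finset.card_pos.mpr ⟨e, he⟩
  omega

/-- restriction equivalence: remove the element mapped to 0 -/
def resEquiv {E : Type*} {m : ℕ} (σ : E ≃ Fin (m+1)) : {f : E // f ≠ σ.symm 0} ≃ Fin m where
  toFun f := (σ f.1).pred (fun h => f.2 (by rw [← σ.symm_apply_apply f.1, h]))
  invFun i := ⟨σ.symm i.succ, fun h => Fin.succ_ne_zero i (σ.symm.injective h)⟩
  left_inv f := Subtype.ext (by simp)
  right_inv i := by simp

lemma resEquiv_lt {E : Type*} {m : ℕ} (σ : E ≃ Fin (m+1)) (f g : {f : E // f ≠ σ.symm 0}) :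
    resEquiv σ f < resEquiv σ g ↔ σ f.1 < σ g.1 := by
  simp only [resEquiv, Equiv.coe_fn_mk]
  exact Fin.pred_lt_pred_iff

lemma resEquiv_eq {E : Type*} {m : ℕ} (σ τ : E ≃ Fin (m+1)) (h0 : σ.symm 0 = τ.symm 0)
    (h : ∀ f : {f : E // f ≠ σ.symm 0}, resEquiv σ f = resEquiv τ ⟨f.1, h0 ▸ f.2⟩) : σ = τ := by
  ext x
  by_cases hx : x = σ.symm 0
  · subst hx
    rw [σ.apply_symm_apply, h0, τ.apply_symm_apply]
  · have := h ⟨x, hx⟩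
    simp only [resEquiv, Equiv.coe_fn_mk] at this
    have h2 := congrArg Fin.succ this
    rw [Fin.succ_pred, Fin.succ_pred] at h2
    rw [h2]

lemma sum_ratio_le {V E : Type*} [Fintype V] [Fintype E] (src dst : E → V)
    (M : Finset E) (hM : ∀ e, e ∈ M ↔ inDeg dst (src e) = 0) :
    ∑ e ∈ M,
      (((inDeg dst (dst e) : ℚ) + (outDeg src (dst e) : ℚ)) / (inDeg dst (dst e) : ℚ))
      ≤ (Fintype.card E : ℚ) := by
  classical
  set I : V → ℕ := fun v => inDeg dst v with hI
  set O : V → ℕ := fun v => outDeg src v with hO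
  have hIcard : ∀ v, I v = (Finset.univ.filter (fun e => dst e = v)).card := by
    intro v; rw [hI]; exact card_sub0 _
  have hOcard : ∀ v, O v = (Finset.univ.filter (fun e => src e = v)).card := by
    intro v; rw [hO]; exact card_sub0 _
  set g : V → ℚ := fun v => ((I v : ℚ) + (O v : ℚ)) / (I v : ℚ) with hg
  -- fiberwise over dst
  have stepA : ∑ e ∈ M, g (dst e) = ∑ v : V, ((M.filter (fun e => dst e = v)).card : ℚ) * g v := by
    rw [← Finset.sum_fiberwise_of_maps_to (fun e _ => Finset.mem_univ (dst e)) (fun e => g (dst e))]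
    refine Finset.sum_congr rfl (fun v _ => ?_)
    rw [Finset.sum_congr rfl (fun e he => by
      rw [(Finset.mem_filter.mp he).2]), Finset.sum_const, nsmul_eq_mul]
  have hmle : ∀ v, (M.filter (fun e => dst e = v)).card ≤ I v := by
    intro v; rw [hIcard]
    exact Finset.card_le_card (fun e he => by
      simp only [Finset.mem_filter] at he ⊢; exact ⟨Finset.mem_univ e, he.2⟩)
  have stepB : ∀ v : V, ((M.filter (fun e => dst e = v)).card : ℚ) * g v ≤
      ((M.filter (fun e => dst e = v)).card : ℚ) + (if I v = 0 then 0 else (O v : ℚ)) := by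
    intro v
    set m := (M.filter (fun e => dst e = v)).card with hm
    by_cases h0 : I v = 0
    · have : m = 0 := Nat.le_zero.mp (h0 ▸ hmle v)
      simp [this, h0]
    · have hpos : (0:ℚ) < (I v : ℚ) := by
        exact_mod_cast Nat.pos_of_ne_zero h0
      rw [if_neg h0]
      simp only [hg]
      rw [← mul_div_assoc, div_le_iff₀ hpos]
      have hc : ((m:ℚ)) ≤ (I v : ℚ) := by exact_mod_cast hmle v
      have hOnn : (0:ℚ) ≤ (O v : ℚ) := by positivity
      nlinarith [hc, hOnn, hpos]
  -- step C/D/E : assemble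
  have stepD : (M.card : ℚ) = ∑ v : V, (if I v = 0 then (O v : ℚ) else 0) := by
    have h1 : M.card = ∑ v : V, (M.filter (fun e => src e = v)).card :=
      Finset.card_eq_sum_card_fiberwise (fun e _ => Finset.mem_univ (src e))
    have h2 : ∀ v : V, (M.filter (fun e => src e = v)).card
        = if I v = 0 then O v else 0 := by
      intro v
      by_cases h0 : I v = 0
      · rw [if_pos h0, hOcard]
        congr 1
        ext e
        simp only [Finset.mem_filter, Finset.mem_univ, true_and, hM]
        constructor
        · rintro ⟨-, h⟩; exact h
        · intro h; exact ⟨by rw [h]; exact h0, h⟩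
      · rw [if_neg h0]
        rw [Finset.card_eq_zero]
        ext e
        simp only [Finset.mem_filter, Finset.notMem_empty, iff_false, not_and, hM]
        intro h1' h2'; exact h0 (h2' ▸ h1')
    rw [h1]
    push_cast [h2]
    rfl
  have stepE : (∑ v : V, (if I v = 0 then (O v : ℚ) else 0))
      + (∑ v : V, (if I v = 0 then 0 else (O v : ℚ))) = (Fintype.card E : ℚ) := by
    rw [← Finset.sum_add_distrib]
    have : ∀ v : V, ((if I v = 0 then (O v : ℚ) else 0) + (if I v = 0 then 0 else (O v : ℚ)))
        = (O v : ℚ) := by intro v; by_cases h : I v = 0 <;> simp [h]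
    rw [Finset.sum_congr rfl (fun v _ => this v)]
    rw [card_eq_sum_out src]
    push_cast [hOcard]
    rfl
  have stepC : ∑ v : V, (((M.filter (fun e => dst e = v)).card : ℚ)
      + (if I v = 0 then 0 else (O v : ℚ)))
      = (M.card : ℚ) + ∑ v : V, (if I v = 0 then 0 else (O v : ℚ)) := by
    rw [Finset.sum_add_distrib]
    congr 1
    rw [Finset.card_eq_sum_card_fiberwise (fun e (_ : e ∈ M) => Finset.mem_univ (dst e))]
    push_cast; rfl
  have hgoal : ∑ e ∈ M, g (dst e) ≤ (Fintype.card E : ℚ) := by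
    rw [stepA]
    refine le_trans (Finset.sum_le_sum (fun v _ => stepB v)) ?_
    rw [stepC, stepD]
    exact le_of_eq stepE
  exact hgoal

lemma lineLT_res {V E : Type*} (src dst : E → V) (e : E) {x y : {f : E // f ≠ e}} :
    lineLT (fun f : {f : E // f ≠ e} => src f.1) (fun f : {f : E // f ≠ e} => dst f.1) x y →
      lineLT src dst x.1 y.1 :=
  fun h => Relation.TransGen.lift Subtype.val (fun _ _ h => h) x y h

lemma vstep_res {V E : Type*} (src dst : E → V) (e : E) {u v : V} :
    vStep (fun f : {f : E // f ≠ e} => src f.1) (fun f : {f : E // f ≠ e} => dst f.1) u v →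
      vStep src dst u v :=
  fun ⟨f, h⟩ => ⟨f.1, h⟩

def resCond {V E : Type*} (src dst : E → V) {m : ℕ} (e : E)
    (τ : {f : E // f ≠ e} ≃ Fin m) : Prop :=
  ∀ x y, lineLT (fun f : {f : E // f ≠ e} => src f.1) (fun f : {f : E // f ≠ e} => dst f.1) x y
    → τ x < τ y

def Tt {V E : Type*} (src dst : E → V) (m : ℕ) (e : {e : E // inDeg dst (src e) = 0}) :
    Type _ :=
  {τ : {f : E // f ≠ e.1} ≃ Fin m // resCond src dst e.1 τ}

def Phi {V E : Type*} (src dst : E → V) {m : ℕ}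
    (σ : {σ : E ≃ Fin (m+1) // ∀ x y : E, lineLT src dst x y → σ x < σ y})
    (hm : inDeg dst (src (σ.1.symm 0)) = 0) :
    Σ e : {e : E // inDeg dst (src e) = 0}, Tt src dst m e :=
  ⟨⟨σ.1.symm 0, hm⟩, ⟨resEquiv σ.1,
    fun x y hxy => (resEquiv_lt σ.1 x y).mpr (σ.2 x.1 y.1 (lineLT_res src dst _ hxy))⟩⟩

def recFn {V E : Type*} [DecidableEq E] (src dst : E → V) (m : ℕ)
    (p : Σ e : {e : E // inDeg dst (src e) = 0}, Tt src dst m e) (x : E) : Fin (m+1) :=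
  if hx : x = p.1.1 then 0 else ((p.2.1 : {f : E // f ≠ p.1.1} ≃ Fin m) ⟨x, hx⟩).succ

lemma recFn_Phi {V E : Type*} [DecidableEq E] (src dst : E → V) {m : ℕ}
    (σ : {σ : E ≃ Fin (m+1) // ∀ x y : E, lineLT src dst x y → σ x < σ y})
    (hm : inDeg dst (src (σ.1.symm 0)) = 0) :
    recFn src dst m (Phi src dst σ hm) = ⇑σ.1 := by
  funext x
  by_cases hx : x = σ.1.symm 0
  · simp only [recFn, Phi]
    simp [hx]
  · simp only [recFn, Phi]
    simp [hx, resEquiv, Fin.succ_pred]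
    exact Fin.succ_pred _ (fun h => hx (by rw [← h, Equiv.symm_apply_apply]))

lemma Phi_inj {V E : Type*} [DecidableEq E] (src dst : E → V) {m : ℕ}
    {σ τ : {σ : E ≃ Fin (m+1) // ∀ x y : E, lineLT src dst x y → σ x < σ y}}
    {hm1 : inDeg dst (src (σ.1.symm 0)) = 0} {hm2 : inDeg dst (src (τ.1.symm 0)) = 0}
    (h : Phi src dst σ hm1 = Phi src dst τ hm2) : σ = τ := by
  have h2 : ⇑σ.1 = ⇑τ.1 := by
    rw [← recFn_Phi src dst σ hm1, ← recFn_Phi src dst τ hm2, h]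
  exact Subtype.ext (Equiv.coe_fn_injective h2)

universe uv ue

theorem aux : ∀ (n : ℕ), ∀ {V : Type uv} {E : Type ue} [Fintype V] [Fintype E]
    (src dst : E → V), Fintype.card E = n →
    (∀ w : V, ¬ Relation.TransGen (vStep src dst) w w) →
    Nat.card {σ : E ≃ Fin n // ∀ x y : E, lineLT src dst x y → σ x < σ y} *
      ∏ v : V, ((inDeg dst v + outDeg src v).choose (outDeg src v)) ≤ Nat.factorial n := by
  intro n
  induction n using Nat.strong_induction_on with
  | _ n IH =>
    intro V E _ _ src dst hcard hacyc
    classical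
    rcases n with _ | m
    · -- empty case
      have hE : IsEmpty E := Fintype.card_eq_zero_iff.mp hcard
      have hdeg : ∀ v : V, inDeg dst v = 0 := fun v => by
        simp [inDeg, Nat.card_eq_fintype_card]
      have hdeg2 : ∀ v : V, outDeg src v = 0 := fun v => by
        simp [outDeg, Nat.card_eq_fintype_card]
      have hsub : Subsingleton (E ≃ Fin 0) := ⟨fun a b => by ext x; exact hE.elim x⟩
      have h1 : Nat.card {σ : E ≃ Fin 0 // ∀ x y : E, lineLT src dst x y → σ x < σ y} ≤ 1 := by
        have : Subsingleton {σ : E ≃ Fin 0 // ∀ x y : E, lineLT src dst x y → σ x < σ y} :=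
          ⟨fun a b => Subtype.ext (hsub.allEq a.1 b.1)⟩
        exact Finite.card_le_one_iff_subsingleton.mpr this
      calc Nat.card {σ : E ≃ Fin 0 // ∀ x y : E, lineLT src dst x y → σ x < σ y} *
            ∏ v : V, ((inDeg dst v + outDeg src v).choose (outDeg src v))
          = Nat.card {σ : E ≃ Fin 0 // ∀ x y : E, lineLT src dst x y → σ x < σ y} * 1 := by
            congr 1
            exact Finset.prod_eq_one (fun v _ => by simp [hdeg, hdeg2])
        _ ≤ 1 := by simpa using h1
    · -- main case, n = m+1
      have hminS : ∀ σ : {σ : E ≃ Fin (m+1) // ∀ x y : E, lineLT src dst x y → σ x < σ y},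
          inDeg dst (src (σ.1.symm 0)) = 0 := by
        intro σ
        by_contra h
        have hpos : 0 < inDeg dst (src (σ.1.symm 0)) := Nat.pos_of_ne_zero h
        rw [inDeg, Nat.card_eq_fintype_card] at hpos
        obtain ⟨⟨f, hf⟩⟩ := Fintype.card_pos_iff.mp hpos
        have hlt := σ.2 f (σ.1.symm 0) (Relation.TransGen.single hf)
        rw [Equiv.apply_symm_apply] at hlt
        exact absurd hlt (by simp)
      have hinj : Function.Injective
          (fun σ : {σ : E ≃ Fin (m+1) // ∀ x y : E, lineLT src dst x y → σ x < σ y} =>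
            Phi src dst σ (hminS σ)) := fun σ τ h => Phi_inj src dst h
      haveI hTfin : ∀ e : {e : E // inDeg dst (src e) = 0}, Fintype (Tt src dst m e) := by
        intro e; unfold Tt resCond; infer_instance
      have hcard1 : Nat.card {σ : E ≃ Fin (m+1) // ∀ x y : E, lineLT src dst x y → σ x < σ y}
          ≤ ∑ e : {e : E // inDeg dst (src e) = 0}, Nat.card (Tt src dst m e) := by
        calc Nat.card {σ : E ≃ Fin (m+1) // ∀ x y : E, lineLT src dst x y → σ x < σ y}
            ≤ Nat.card (Σ e : {e : E // inDeg dst (src e) = 0}, Tt src dst m e) :=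
              Nat.card_le_card_of_injective _ hinj
          _ = ∑ e : {e : E // inDeg dst (src e) = 0}, Nat.card (Tt src dst m e) := by
              rw [Nat.card_eq_fintype_card, Fintype.card_sigma]
              exact Finset.sum_congr rfl (fun e _ => (Nat.card_eq_fintype_card).symm)
      have key : ∀ e : {e : E // inDeg dst (src e) = 0},
          (Nat.card (Tt src dst m e) : ℚ) *
            (∏ v : V, (((inDeg dst v + outDeg src v).choose (outDeg src v) : ℕ) : ℚ)) ≤
          (Nat.factorial m : ℚ) *
            (((inDeg dst (dst e.1) : ℚ) + (outDeg src (dst e.1) : ℚ)) / (inDeg dst (dst e.1) : ℚ)) := by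
        rintro ⟨e, he⟩
        have huw : src e ≠ dst e := by
          intro h
          exact hacyc (src e) (Relation.TransGen.single ⟨e, rfl, h.symm⟩)
        have hcard' : Fintype.card {f : E // f ≠ e} = m := by
          rw [Fintype.card_subtype]
          have hfe : Finset.univ.filter (fun f : E => f ≠ e) = Finset.univ.erase e := by
            ext f
            simp [Finset.mem_erase]
          rw [hfe, Finset.card_erase_of_mem (Finset.mem_univ e), Finset.card_univ, hcard]
          omega
        have hacyc' : ∀ w : V, ¬ Relation.TransGen
            (vStep (fun f : {f : E // f ≠ e} => src f.1) (fun f : {f : E // f ≠ e} => dst f.1)) w w :=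
          fun w hw => hacyc w (Relation.TransGen.mono (fun a b => vstep_res src dst e) w w hw)
        have hIH := IH m (Nat.lt_succ_self m)
          (fun f : {f : E // f ≠ e} => src f.1) (fun f : {f : E // f ≠ e} => dst f.1) hcard' hacyc'
        have hTt : Nat.card (Tt src dst m ⟨e, he⟩) =
            Nat.card {σ : {f : E // f ≠ e} ≃ Fin m // ∀ x y,
              lineLT (fun f : {f : E // f ≠ e} => src f.1) (fun f : {f : E // f ≠ e} => dst f.1) x y
                → σ x < σ y} := rfl
        have hin_ne : ∀ v : V, v ≠ dst e →
            inDeg (fun f : {f : E // f ≠ e} => dst f.1) v = inDeg dst v := by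
          intro v hv
          exact card_res_ne e (fun f => dst f = v) (fun hh => hv hh.symm)
        have hout_ne : ∀ v : V, v ≠ src e →
            outDeg (fun f : {f : E // f ≠ e} => src f.1) v = outDeg src v := by
          intro v hv
          exact card_res_ne e (fun f => src f = v) (fun hh => hv hh.symm)
        have hin_w : inDeg (fun f : {f : E // f ≠ e} => dst f.1) (dst e) + 1 = inDeg dst (dst e) :=
          card_res_eq e (fun f => dst f = dst e) rfl
        have hprod : (∏ v : V, ((inDeg dst v + outDeg src v).choose (outDeg src v)))
              * inDeg dst (dst e)
            = (∏ v : V, ((inDeg (fun f : {f : E // f ≠ e} => dst f.1) v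
                  + outDeg (fun f : {f : E // f ≠ e} => src f.1) v).choose
                  (outDeg (fun f : {f : E // f ≠ e} => src f.1) v)))
              * (inDeg dst (dst e) + outDeg src (dst e)) := by
          rw [← Finset.mul_prod_erase Finset.univ _ (Finset.mem_univ (dst e)),
              ← Finset.mul_prod_erase Finset.univ
                (fun v => ((inDeg (fun f : {f : E // f ≠ e} => dst f.1) v
                  + outDeg (fun f : {f : E // f ≠ e} => src f.1) v).choose
                  (outDeg (fun f : {f : E // f ≠ e} => src f.1) v))) (Finset.mem_univ (dst e))]
          have hrest : ∏ v ∈ Finset.univ.erase (dst e),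
                ((inDeg (fun f : {f : E // f ≠ e} => dst f.1) v
                  + outDeg (fun f : {f : E // f ≠ e} => src f.1) v).choose
                  (outDeg (fun f : {f : E // f ≠ e} => src f.1) v))
              = ∏ v ∈ Finset.univ.erase (dst e),
                ((inDeg dst v + outDeg src v).choose (outDeg src v)) := by
            refine Finset.prod_congr rfl (fun v hv => ?_)
            have hvne : v ≠ dst e := (Finset.mem_erase.mp hv).1
            rw [hin_ne v hvne]
            by_cases hvu : v = src e
            · subst hvu
              rw [he]
              simp
            · rw [hout_ne v hvu]
          rw [hrest]
          have hw_out : outDeg (fun f : {f : E // f ≠ e} => src f.1) (dst e) = outDeg src (dst e) :=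
            hout_ne (dst e) (Ne.symm huw)
          have hj : inDeg dst (dst e) = inDeg (fun f : {f : E // f ≠ e} => dst f.1) (dst e) + 1 :=
            hin_w.symm
          rw [hj, hw_out, mul_right_comm, choose_ratio, mul_right_comm]
        have hipos : 0 < inDeg dst (dst e) := by
          rw [inDeg, Nat.card_eq_fintype_card]
          exact Fintype.card_pos_iff.mpr ⟨⟨e, rfl⟩⟩
        have hnat : (Nat.card (Tt src dst m ⟨e, he⟩)
              * (∏ v : V, ((inDeg dst v + outDeg src v).choose (outDeg src v))))
              * inDeg dst (dst e)
            ≤ Nat.factorial m * (inDeg dst (dst e) + outDeg src (dst e)) := by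
          rw [mul_assoc, hprod, ← mul_assoc]
          exact Nat.mul_le_mul_right _ (hTt ▸ hIH)
        have hiposQ : (0:ℚ) < (inDeg dst (dst e) : ℚ) := by exact_mod_cast hipos
        have hq : (Nat.card (Tt src dst m ⟨e, he⟩) : ℚ) *
              (∏ v : V, (((inDeg dst v + outDeg src v).choose (outDeg src v) : ℕ) : ℚ))
            ≤ ((Nat.factorial m : ℚ) * ((inDeg dst (dst e) : ℚ) + (outDeg src (dst e) : ℚ)))
              / (inDeg dst (dst e) : ℚ) := by
          rw [le_div_iff₀ hiposQ]
          exact_mod_cast hnat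
        calc (Nat.card (Tt src dst m ⟨e, he⟩) : ℚ) *
              (∏ v : V, (((inDeg dst v + outDeg src v).choose (outDeg src v) : ℕ) : ℚ))
            ≤ ((Nat.factorial m : ℚ) * ((inDeg dst (dst e) : ℚ) + (outDeg src (dst e) : ℚ)))
              / (inDeg dst (dst e) : ℚ) := hq
          _ = (Nat.factorial m : ℚ) *
              (((inDeg dst (dst e) : ℚ) + (outDeg src (dst e) : ℚ)) / (inDeg dst (dst e) : ℚ)) := by
              rw [mul_div_assoc]
      have hsum := sum_ratio_le src dst
        (Finset.univ.filter (fun e : E => inDeg dst (src e) = 0)) (fun e => by simp)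
      have final : (Nat.card {σ : E ≃ Fin (m+1) // ∀ x y : E, lineLT src dst x y → σ x < σ y} : ℚ)
            * (∏ v : V, (((inDeg dst v + outDeg src v).choose (outDeg src v) : ℕ) : ℚ))
          ≤ (Nat.factorial (m+1) : ℚ) := by
        calc (Nat.card {σ : E ≃ Fin (m+1) // ∀ x y : E, lineLT src dst x y → σ x < σ y} : ℚ)
              * (∏ v : V, (((inDeg dst v + outDeg src v).choose (outDeg src v) : ℕ) : ℚ))
            ≤ (∑ e : {e : E // inDeg dst (src e) = 0}, (Nat.card (Tt src dst m e) : ℚ))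
              * (∏ v : V, (((inDeg dst v + outDeg src v).choose (outDeg src v) : ℕ) : ℚ)) := by
              apply mul_le_mul_of_nonneg_right _ (by positivity)
              exact_mod_cast hcard1
          _ = ∑ e : {e : E // inDeg dst (src e) = 0}, ((Nat.card (Tt src dst m e) : ℚ)
              * (∏ v : V, (((inDeg dst v + outDeg src v).choose (outDeg src v) : ℕ) : ℚ))) := by
              rw [Finset.sum_mul]
          _ ≤ ∑ e : {e : E // inDeg dst (src e) = 0}, (Nat.factorial m : ℚ) *
              (((inDeg dst (dst e.1) : ℚ) + (outDeg src (dst e.1) : ℚ)) / (inDeg dst (dst e.1) : ℚ)) :=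
              Finset.sum_le_sum (fun e _ => key e)
          _ = (Nat.factorial m : ℚ) * ∑ e : {e : E // inDeg dst (src e) = 0},
              (((inDeg dst (dst e.1) : ℚ) + (outDeg src (dst e.1) : ℚ)) / (inDeg dst (dst e.1) : ℚ)) := by
              rw [Finset.mul_sum]
          _ ≤ (Nat.factorial m : ℚ) * (Fintype.card E : ℚ) := by
              apply mul_le_mul_of_nonneg_left _ (by positivity)
              rw [← Finset.sum_subtype
                (Finset.univ.filter (fun e : E => inDeg dst (src e) = 0)) (fun x => by simp)
                (fun e => (((inDeg dst (dst e) : ℚ) + (outDeg src (dst e) : ℚ)) / (inDeg dst (dst e) : ℚ)))]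
              exact hsum
          _ = (Nat.factorial (m+1) : ℚ) := by
              rw [hcard]
              push_cast [Nat.factorial_succ]
              ring
      exact_mod_cast final



/-- if `P` (a finite order on `α`, with `n` elements) is N-free
with arc diagram the dag `(V, E, src, dst)` (unique source, unique sink), then
`e(P) · ∏_v C(i_v + o_v, o_v) ≤ n!`, i.e.
`e(P) ≤ n! · ∏_v C(i_v + o_v, o_v)⁻¹`. -/
theorem stmt2 {α V E : Type*} [Fintype α] [PartialOrder α] [Fintype V] [Fintype E]
    (src dst : E → V)
    (hacyc : ∀ v : V, ¬ Relation.TransGen (vStep src dst) v v)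
    (hsource : ∃! s : V, ∀ e : E, dst e ≠ s)
    (hsink : ∃! t : V, ∀ e : E, src e ≠ t)
    (φ : α ≃ E)
    (hφ : ∀ x y : α, x < y ↔ lineLT src dst (φ x) (φ y)) :
    numLinExt α (· < ·) *
        ∏ v : V, Nat.choose (inDeg dst v + outDeg src v) (outDeg src v) ≤
      Nat.factorial (Fintype.card α) := by
  classical
  have hcardEq : Fintype.card E = Fintype.card α := (Fintype.card_congr φ).symm
  have htrans : numLinExt α (· < ·) =
      Nat.card {σ : E ≃ Fin (Fintype.card α) // ∀ x y : E, lineLT src dst x y → σ x < σ y} := by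
    rw [numLinExt]
    apply Nat.card_congr
    refine ⟨fun σ => ⟨φ.symm.trans σ.1, fun x y h => σ.2 _ _ ((hφ _ _).mpr (by simpa using h))⟩,
      fun τ => ⟨φ.trans τ.1, fun x y h => τ.2 (φ x) (φ y) ((hφ x y).mp h)⟩, ?_, ?_⟩
    · intro σ
      apply Subtype.ext
      ext a
      simp
    · intro τ
      apply Subtype.ext
      ext f
      simp
  rw [htrans]
  exact aux (Fintype.card α) src dst hcardEq hacyc
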